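/- Consider an MM network with output y and the SMM network with the same weights and biases, parameter β > 0, and output y_SMM. Let H = max_{1≤k≤K} h_k. Then for every x ∈ ℝ^d, |y_SMM(x) − y(x)| ≤ (1/β)·ln(max(K, H)). -/

import Mathlib

/-- The scaled LogSumExp function: `LSE_β(x₁,…,xₙ) = (1/β)·log(∑ i, exp(β·xᵢ))`. -/
noncomputable def lse (β : ℝ) {n : ℕ} (x : Fin n → ℝ) : ℝ :=
  (1 / β) * Real.log (∑ i, Real.exp (β * x i))


lemma sup'_le_lse {n : ℕ} [Nonempty (Fin n)] {β : ℝ} (hβ : 0 < β) (x : Fin n → ℝ) :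
    Finset.univ.sup' Finset.univ_nonempty x ≤ lse β x := by
  obtain ⟨j, -, hj⟩ := Finset.exists_mem_eq_sup' Finset.univ_nonempty x
  rw [lse, one_div, inv_mul_eq_div, le_div_iff₀ hβ, hj]
  calc x j * β = β * x j := by ring
    _ = Real.log (Real.exp (β * x j)) := (Real.log_exp _).symm
    _ ≤ Real.log (∑ i, Real.exp (β * x i)) :=
      Real.log_le_log (Real.exp_pos _)
        (Finset.single_le_sum (f := fun i => Real.exp (β * x i)) (fun i _ => (Real.exp_pos _).le) (Finset.mem_univ j))

lemma lse_le_sup'_add {n : ℕ} [Nonempty (Fin n)] {β : ℝ} (hβ : 0 < β) (x : Fin n → ℝ) :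
    lse β x ≤ Finset.univ.sup' Finset.univ_nonempty x + Real.log n / β := by
  set M := Finset.univ.sup' Finset.univ_nonempty x with hM
  have hn : (0:ℝ) < n := by
    have : 0 < n := Nat.pos_of_ne_zero (by rintro rfl; exact (not_nonempty_iff.mpr inferInstance) ‹Nonempty (Fin 0)›)
    exact_mod_cast this
  rw [lse, one_div, inv_mul_eq_div, div_le_iff₀ hβ]
  have hS : (∑ i, Real.exp (β * x i)) ≤ n * Real.exp (β * M) := by
    calc (∑ i, Real.exp (β * x i)) ≤ ∑ _i : Fin n, Real.exp (β * M) :=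
        Finset.sum_le_sum fun i _ => Real.exp_le_exp.mpr
          (mul_le_mul_of_nonneg_left (Finset.le_sup' x (Finset.mem_univ i)) hβ.le)
      _ = n * Real.exp (β * M) := by simp [Finset.card_univ]
  have hpos : (0:ℝ) < ∑ i, Real.exp (β * x i) :=
    Finset.sum_pos (fun i _ => Real.exp_pos _) Finset.univ_nonempty
  have := Real.log_le_log hpos hS
  rw [Real.log_mul (ne_of_gt hn) (Real.exp_ne_zero _), Real.log_exp] at this
  have heq : (M + Real.log n / β) * β = β * M + Real.log n := by field_simp
  rw [heq]; linarith

lemma lse_neg_le_inf' {n : ℕ} [Nonempty (Fin n)] {β : ℝ} (hβ : 0 < β) (x : Fin n → ℝ) :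
    lse (-β) x ≤ Finset.univ.inf' Finset.univ_nonempty x := by
  obtain ⟨j, -, hj⟩ := Finset.exists_mem_eq_inf' Finset.univ_nonempty x
  rw [lse, one_div, inv_mul_eq_div, div_le_iff_of_neg (neg_neg_iff_pos.mpr hβ), hj]
  calc x j * -β = Real.log (Real.exp (-β * x j)) := by rw [Real.log_exp]; ring
    _ ≤ Real.log (∑ i, Real.exp (-β * x i)) :=
      Real.log_le_log (Real.exp_pos _)
        (Finset.single_le_sum (f := fun i => Real.exp (-β * x i)) (fun i _ => (Real.exp_pos _).le) (Finset.mem_univ j))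

lemma inf'_sub_le_lse_neg {n : ℕ} [Nonempty (Fin n)] {β : ℝ} (hβ : 0 < β) (x : Fin n → ℝ) :
    Finset.univ.inf' Finset.univ_nonempty x - Real.log n / β ≤ lse (-β) x := by
  set M := Finset.univ.inf' Finset.univ_nonempty x with hM
  have hn : (0:ℝ) < n := by
    have : 0 < n := Nat.pos_of_ne_zero (by rintro rfl; exact (not_nonempty_iff.mpr inferInstance) ‹Nonempty (Fin 0)›)
    exact_mod_cast this
  rw [lse, one_div, inv_mul_eq_div, le_div_iff_of_neg (neg_neg_iff_pos.mpr hβ)]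
  have hS : (∑ i, Real.exp (-β * x i)) ≤ n * Real.exp (-β * M) := by
    calc (∑ i, Real.exp (-β * x i)) ≤ ∑ _i : Fin n, Real.exp (-β * M) :=
        Finset.sum_le_sum fun i _ => Real.exp_le_exp.mpr (by
          have := Finset.inf'_le x (Finset.mem_univ i)
          nlinarith)
      _ = n * Real.exp (-β * M) := by simp [Finset.card_univ]
  have hpos : (0:ℝ) < ∑ i, Real.exp (-β * x i) :=
    Finset.sum_pos (fun i _ => Real.exp_pos _) Finset.univ_nonempty
  have hl := Real.log_le_log hpos hS
  rw [Real.log_mul (ne_of_gt hn) (Real.exp_ne_zero _), Real.log_exp] at hl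
  have hb : β ≠ 0 := ne_of_gt hβ
  have : (M - Real.log n / β) * -β = -β * M + Real.log n := by field_simp; ring
  rw [this]
  linarith

/-- Output of a min-max (MM) network: `y(x) = min_k max_j (w^(k,j)·x − b^(k,j))`. -/
noncomputable def mmOut {d K : ℕ} {h : Fin K → ℕ} (hK : 0 < K) (hh : ∀ k, 0 < h k)
    (w : (k : Fin K) → Fin (h k) → Fin d → ℝ)
    (b : (k : Fin K) → Fin (h k) → ℝ) (x : Fin d → ℝ) : ℝ :=
  haveI : Nonempty (Fin K) := Fin.pos_iff_nonempty.mp hK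
  Finset.univ.inf' Finset.univ_nonempty fun k =>
    haveI : Nonempty (Fin (h k)) := Fin.pos_iff_nonempty.mp (hh k)
    Finset.univ.sup' Finset.univ_nonempty fun j => (∑ i, w k j i * x i) - b k j

/-- Output of a smooth min-max (SMM) network. -/
noncomputable def smmOut {d K : ℕ} {h : Fin K → ℕ} (β : ℝ)
    (w : (k : Fin K) → Fin (h k) → Fin d → ℝ)
    (b : (k : Fin K) → Fin (h k) → ℝ) (x : Fin d → ℝ) : ℝ :=
  lse (-β) fun k => lse β fun j => (∑ i, w k j i * x i) - b k j

/-- With `H = max_k h_k`, the SMM and MM outputs satisfy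
`|y_SMM(x) − y(x)| ≤ (1/β)·ln (max K H)` for every `x`. -/
theorem abs_smmOut_sub_mmOut_le {d K : ℕ} {h : Fin K → ℕ} (hK : 0 < K) (hh : ∀ k, 0 < h k)
    (β : ℝ) (hβ : 0 < β)
    (w : (k : Fin K) → Fin (h k) → Fin d → ℝ) (hw : ∀ k j i, 0 ≤ w k j i)
    (b : (k : Fin K) → Fin (h k) → ℝ) (x : Fin d → ℝ) :
    |smmOut β w b x - mmOut hK hh w b x| ≤
      (1 / β) * Real.log
        ((max K (Finset.univ.sup'
          (Finset.univ_nonempty_iff.mpr (Fin.pos_iff_nonempty.mp hK)) h) : ℕ)) := by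
  haveI : Nonempty (Fin K) := Fin.pos_iff_nonempty.mp hK
  have inst : ∀ k, Nonempty (Fin (h k)) := fun k => Fin.pos_iff_nonempty.mp (hh k)
  set N : ℕ := max K (Finset.univ.sup'
      (Finset.univ_nonempty_iff.mpr (Fin.pos_iff_nonempty.mp hK)) h) with hN
  set a : (k : Fin K) → Fin (h k) → ℝ := fun k j => (∑ i, w k j i * x i) - b k j with ha
  set g : Fin K → ℝ := fun k => lse β (a k) with hg
  set m : Fin K → ℝ := fun k =>
    haveI := inst k
    Finset.univ.sup' Finset.univ_nonempty (a k) with hm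
  have hmm : mmOut hK hh w b x = Finset.univ.inf' Finset.univ_nonempty m := rfl
  have hsmm : smmOut β w b x = lse (-β) g := rfl
  have hNK : (K : ℝ) ≤ (N : ℝ) := by exact_mod_cast le_max_left _ _
  have hKpos : (0:ℝ) < K := by exact_mod_cast hK
  have hlogKN : Real.log K ≤ Real.log N := Real.log_le_log hKpos hNK
  have hhN : ∀ k, Real.log (h k) ≤ Real.log N := by
    intro k
    refine Real.log_le_log (by exact_mod_cast hh k) ?_
    have : h k ≤ N := le_trans (Finset.le_sup' h (Finset.mem_univ k)) (le_max_right _ _)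
    exact_mod_cast this
  -- pointwise bounds on g
  have hmg : ∀ k, m k ≤ g k := fun k => haveI := inst k; sup'_le_lse hβ (a k)
  have hgm : ∀ k, g k ≤ m k + Real.log N / β := by
    intro k
    haveI := inst k
    refine le_trans (lse_le_sup'_add hβ (a k)) ?_
    have := hhN k
    have : Real.log (h k) / β ≤ Real.log N / β := by
      apply div_le_div_of_nonneg_right (hhN k) hβ.le  -- maybe wrong name
    linarith
  -- bounds on smm
  have h1 : smmOut β w b x ≤ Finset.univ.inf' Finset.univ_nonempty g :=
    hsmm ▸ lse_neg_le_inf' hβ g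
  have h2 : Finset.univ.inf' Finset.univ_nonempty g - Real.log K / β ≤ smmOut β w b x :=
    hsmm ▸ inf'_sub_le_lse_neg hβ g
  obtain ⟨k0, -, hk0⟩ := Finset.exists_mem_eq_inf' (Finset.univ_nonempty (α := Fin K)) m
  have hup : Finset.univ.inf' Finset.univ_nonempty g ≤
      Finset.univ.inf' Finset.univ_nonempty m + Real.log N / β := by
    rw [hk0]
    exact le_trans (Finset.inf'_le g (Finset.mem_univ k0)) (hgm k0)
  have hlow : Finset.univ.inf' Finset.univ_nonempty m ≤
      Finset.univ.inf' Finset.univ_nonempty g :=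
    Finset.le_inf' _ _ fun k _ => le_trans (Finset.inf'_le m (Finset.mem_univ k)) (hmg k)
  have heq : (1 / β) * Real.log N = Real.log N / β := by ring
  rw [abs_le, hmm, heq]
  constructor
  · have : Real.log K / β ≤ Real.log N / β := div_le_div_of_nonneg_right hlogKN hβ.le  -- name?
    linarith
  · linarith
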